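/- With M, B, X, p, Ψ as in the coalgebra-morphism setup, assume additionally that p is independent from B with respect to τ. Then Ψ(bp) = b for all b ∈ B (in particular Ψ is unital), τ ∘ Ψ = τ_p, and Ψ ∘ E^{(pMp)}_{Bp} = E^{(M)}_B ∘ Ψ. -/
import Mathlib


variable {M : Type*} [Ring M] [Algebra ℂ M] [StarRing M] [StarModule ℂ M]

/-- `E` is the `τ`-preserving conditional expectation onto the subalgebra `N`. -/
def IsCondExp (τ : M →ₗ[ℂ] ℂ) (N : Subalgebra ℂ M) (E : M →ₗ[ℂ] M) : Prop :=
  (∀ m, E m ∈ N) ∧ (∀ n ∈ N, E n = n) ∧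
  (∀ n₁ ∈ N, ∀ n₂ ∈ N, ∀ m, E (n₁ * m * n₂) = n₁ * E m * n₂) ∧
  (∀ m, τ (E m) = τ m)

/-- `A` and `C` are free with amalgamation over `B` with respect to `E = E_B`. -/
def AreFreeWithAmalgamation (E : M →ₗ[ℂ] M) (A C : Subalgebra ℂ M) : Prop :=
  ∀ l : List (M × Bool), l ≠ [] →
    (∀ q ∈ l, (if q.2 then q.1 ∈ A else q.1 ∈ C) ∧ E q.1 = 0) →
    l.Chain' (fun q r => q.2 ≠ r.2) →
    E (l.map Prod.fst).prod = 0

/-- Probabilistic properties of `Ψ = E_{B⟨X⟩} ∘ ψ`: with `M, B, X, p, Ψ` as in the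
coalgebra-morphism setup, if moreover `p` is independent from `B` with respect to `τ`,
then `Ψ(bp) = b` for all `b ∈ B` (in particular `Ψ` is unital), `τ ∘ Ψ = τ_p`, and
`Ψ ∘ E^{(pMp)}_{Bp} = E^{(M)}_B ∘ Ψ`. -/
theorem condExpMorphism_unital_trace_preserving
    (τ : M →ₗ[ℂ] ℂ)
    (htrace1 : τ 1 = 1)
    (htracial : ∀ a b : M, τ (a * b) = τ (b * a))
    (hstar : ∀ a : M, τ (star a) = starRingEnd ℂ (τ a))
    (hfaithful : ∀ a : M, τ (star a * a) = 0 → a = 0)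
    (B : Subalgebra ℂ M) (hBstar : ∀ b ∈ B, star b ∈ B)
    (X : M) (hX : IsSelfAdjoint X)
    (p : M) (hproj : p * p = p ∧ star p = p) (hp0 : p ≠ 0)
    (hcomm : ∀ b ∈ B, b * p = p * b)
    (α : ℂ) (hα : α = τ p)
    -- `p` is independent from `B` with respect to `τ`
    (hindep : ∀ b ∈ B, τ (b * p) = τ b * τ p)
    -- `B⟨X⟩` and the conditional expectations `E_{B⟨X⟩}`, `E_B`
    (BX : Subalgebra ℂ M) (hBX : BX = Algebra.adjoin ℂ ((B : Set M) ∪ {X}))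
    (EB : M →ₗ[ℂ] M) (hEB : IsCondExp τ B EB)
    (EBX : M →ₗ[ℂ] M) (hEBX : IsCondExp τ BX EBX)
    -- `X` and `p` are `B`-freely independent
    (hfree : AreFreeWithAmalgamation EB BX (Algebra.adjoin ℂ ((B : Set M) ∪ {p})))
    -- the `τ_p`-preserving conditional expectation of `pMp` onto `W*(Bp)`
    (E₂ : M →ₗ[ℂ] M)
    (hE₂range : ∀ m : M, ∃ b ∈ B, E₂ (p * m * p) = b * p)
    (hE₂fix : ∀ b ∈ B, E₂ (b * p) = b * p)
    (hE₂mod : ∀ b₁ ∈ B, ∀ b₂ ∈ B, ∀ m : M,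
      E₂ ((b₁ * p) * (p * m * p) * (b₂ * p)) = (b₁ * p) * E₂ (p * m * p) * (b₂ * p))
    (hE₂τ : ∀ m : M, τ (E₂ (p * m * p)) = τ (p * m * p)) :
    -- `Ψ(bp) = b` (so `Ψ` is unital), `τ ∘ Ψ = τ_p`, and `Ψ ∘ E_{Bp} = E_B ∘ Ψ` on `pMp`
    (∀ b ∈ B, α⁻¹ • EBX (b * p) = b) ∧
    (∀ m : M, τ (α⁻¹ • EBX (p * m * p)) = α⁻¹ * τ (p * m * p)) ∧
    (∀ m : M, α⁻¹ • EBX (E₂ (p * m * p)) = EB (α⁻¹ • EBX (p * m * p))) := by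
  obtain ⟨hproj1, hproj2⟩ := hproj
  obtain ⟨hEBmem, hEBfix, hEBmod, hEBτ⟩ := hEB
  obtain ⟨hEBXmem, hEBXfix, hEBXmod, hEBXτ⟩ := hEBX
  -- α ≠ 0
  have hα0 : α ≠ 0 := by
    intro h
    apply hp0
    apply hfaithful
    rw [hproj2, hproj1, ← hα, h]
  have hαα : α⁻¹ * α = 1 := inv_mul_cancel₀ hα0
  -- B ⊆ BX
  have hBsubBX : ∀ b ∈ B, b ∈ BX := fun b hb =>
    hBX ▸ Algebra.subset_adjoin (Or.inl hb)
  -- faithfulness on B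
  have hBfaith : ∀ w ∈ B, (∀ b ∈ B, τ (b * w) = 0) → w = 0 := by
    intro w hw h
    exact hfaithful w (h (star w) (hBstar w hw))
  -- trace compatibilities
  have hτEB : ∀ b ∈ B, ∀ m : M, τ (b * EB m) = τ (b * m) := by
    intro b hb m
    have h := hEBmod b hb 1 (one_mem B) m
    simp only [mul_one] at h
    rw [← h, hEBτ]
  have hτEBX : ∀ z ∈ BX, ∀ m : M, τ (z * EBX m) = τ (z * m) := by
    intro z hz m
    have h := hEBXmod z hz 1 (one_mem BX) m
    simp only [mul_one] at h
    rw [← h, hEBXτ]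
  -- EB p = α • 1
  have hEBp : EB p = α • (1 : M) := by
    have h0 : EB p - α • (1 : M) = 0 := by
      apply hBfaith _ (sub_mem (hEBmem p) (B.smul_mem (one_mem B) α))
      intro b hb
      rw [mul_sub, map_sub, hτEB b hb p, hindep b hb, mul_smul_comm, mul_one,
        map_smul, ← hα, smul_eq_mul, mul_comm, sub_self]
    exact sub_eq_zero.mp h0
  -- key lemma: τ (y * p) = α * τ y for y ∈ BX
  have hL1 : ∀ y ∈ BX, τ (y * p) = α * τ y := by
    intro y hy
    have hy0 : EB y ∈ B := hEBmem y
    have hfree0 : EB ((y - EB y) * (p - α • (1 : M))) = 0 := by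
      have h := hfree [(y - EB y, true), (p - α • (1 : M), false)] (by simp) ?_ ?_
      · simpa using h
      · intro q hq
        simp only [List.mem_cons, List.not_mem_nil, or_false] at hq
        have hmem1 : y - EB y ∈ BX := sub_mem hy (hBsubBX _ hy0)
        have hmem2 : p - α • (1 : M) ∈ Algebra.adjoin ℂ ((B : Set M) ∪ {p}) :=
          sub_mem (Algebra.subset_adjoin (Or.inr rfl))
            ((Algebra.adjoin ℂ ((B : Set M) ∪ {p})).smul_mem (one_mem _) α)
        rcases hq with rfl | rfl
        · refine ⟨by simpa using hmem1, ?_⟩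
          rw [map_sub, hEBfix _ hy0, sub_self]
        · refine ⟨by simpa using hmem2, ?_⟩
          rw [map_sub, hEBp, map_smul, hEBfix 1 (one_mem B), sub_self]
      · exact List.isChain_cons_cons.mpr ⟨by simp, List.isChain_singleton _⟩
    have hT : τ ((y - EB y) * (p - α • (1 : M))) = 0 := by
      rw [← hEBτ, hfree0, map_zero]
    have hdec : y * p
        = (y - EB y) * (p - α • (1 : M)) + α • y + EB y * p - α • EB y := by
      rw [sub_mul, mul_sub, mul_sub, mul_smul_comm, mul_one, mul_smul_comm, mul_one]
      abel
    rw [hdec, map_sub, map_add, map_add, hT, map_smul, map_smul, hindep _ hy0, ← hα,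
      hEBτ, zero_add]
    simp only [smul_eq_mul]
    ring
  -- EBX (b * p) = α • b for b ∈ B
  have hL2 : ∀ b ∈ B, EBX (b * p) = α • b := by
    intro b hb
    -- star-closedness of BX
    have hBXstar : ∀ z ∈ BX, star z ∈ BX := by
      intro z hz
      rw [hBX] at hz ⊢
      induction hz using Algebra.adjoin_induction with
      | mem x hx =>
        rcases hx with hx | hx
        · exact Algebra.subset_adjoin (Or.inl (hBstar x hx))
        · rw [Set.mem_singleton_iff.mp hx, hX.star_eq]
          exact Algebra.subset_adjoin (Or.inr rfl)
      | algebraMap r =>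
        rw [← algebraMap_star_comm]
        exact Subalgebra.algebraMap_mem _ _
      | add x y hx hy ihx ihy => rw [star_add]; exact add_mem ihx ihy
      | mul x y hx hy ihx ihy => rw [star_mul]; exact mul_mem ihy ihx
    set z := EBX (b * p) - α • b with hzdef
    have hz : z ∈ BX := sub_mem (hEBXmem _) (SMulMemClass.smul_mem α (hBsubBX b hb))
    have hsz : star z ∈ BX := hBXstar z hz
    have h0 : τ (star z * z) = 0 := by
      rw [hzdef, mul_sub, map_sub, hτEBX _ hsz (b * p), ← mul_assoc,
        hL1 _ (mul_mem hsz (hBsubBX b hb)), mul_smul_comm, map_smul, smul_eq_mul,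
        sub_self]
    have hz0 : z = 0 := hfaithful z h0
    rw [← sub_eq_zero]
    exact hz0
  -- EB ∘ EBX = EB
  have hL3 : ∀ m : M, EB (EBX m) = EB m := by
    intro m
    rw [← sub_eq_zero]
    apply hBfaith _ (sub_mem (hEBmem _) (hEBmem _))
    intro b hb
    rw [mul_sub, map_sub, hτEB b hb, hτEB b hb, hτEBX b (hBsubBX b hb), sub_self]
  -- handy product rearrangements
  have hpl : ∀ x : M, p * (p * x * p) = p * x * p := by
    intro x
    rw [← mul_assoc, ← mul_assoc, hproj1]
  have hpr : ∀ x : M, (p * x * p) * p = p * x * p := by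
    intro x
    rw [mul_assoc, hproj1]
  have hrearr : ∀ b' ∈ B, ∀ m : M, b' * (p * m * p) = p * (b' * m) * p := by
    intro b' hb' m
    rw [← mul_assoc, ← mul_assoc, hcomm b' hb', mul_assoc p b' m]
  have hτpxp : ∀ x : M, τ (p * x * p) = τ (x * p) := by
    intro x
    rw [mul_assoc, htracial, mul_assoc, hproj1]
  have hmulbp : ∀ b1 b2 : M, b2 ∈ B → (b1 * p) * (b2 * p) = (b1 * b2) * p := by
    intro b1 b2 hb2
    rw [mul_assoc b1 p, ← mul_assoc p b2 p, ← hcomm b2 hb2, mul_assoc b2 p p, hproj1,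
      ← mul_assoc]
  refine ⟨?_, ?_, ?_⟩
  · -- Ψ(bp) = b
    intro b hb
    rw [hL2 b hb, smul_smul, hαα, one_smul]
  · -- trace preservation
    intro m
    rw [map_smul, hEBXτ, smul_eq_mul]
  · -- intertwining with conditional expectations
    intro m
    obtain ⟨b, hb, hbe⟩ := hE₂range m
    have hEBpmp : EB (p * m * p) = α • b := by
      rw [← sub_eq_zero]
      apply hBfaith _ (sub_mem (hEBmem _) (B.smul_mem hb α))
      intro b' hb'
      have harg : (b' * p) * (p * m * p) * (1 * p) = p * (b' * m) * p := by
        rw [one_mul, mul_assoc b' p, hpl m, mul_assoc b', hpr m, hrearr b' hb' m]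
      have hmod := hE₂mod b' hb' 1 (one_mem B) m
      rw [harg, hbe, hmulbp b' b hb, hmulbp (b' * b) 1 (one_mem B), mul_one] at hmod
      -- hmod : E₂ (p * (b' * m) * p) = (b' * b) * p
      have hτ2 := hE₂τ (b' * m)
      rw [hmod, hτpxp] at hτ2
      -- hτ2 : τ ((b' * b) * p) = τ ((b' * m) * p)
      have h1 : τ (b' * EB (p * m * p)) = τ ((b' * m) * p) := by
        rw [hτEB b' hb', hrearr b' hb' m, hτpxp]
      have h2 : τ (b' * (α • b)) = τ ((b' * m) * p) := by
        rw [mul_smul_comm, map_smul, smul_eq_mul, ← hτ2, hindep _ (mul_mem hb' hb), ← hα,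
          mul_comm]
      rw [mul_sub, map_sub, h1, h2, sub_self]
    rw [hbe, hL2 b hb, map_smul, hL3, hEBpmp, smul_smul]
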